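/- Let q ≥ 2 be an integer and a ≥ 2 an integer. Then φ⁺_{1,a}(q) ≥ q^(binom(a+1,2)) · (1 − 1/q + 1/q² − 2/q³). -/

import Mathlib

/-- `φ⁺_{a,b}(q) = ∏_{k=a}^{b} (q^k + (−1)^k)`, the empty product (b = a−1) being 1. -/
def phiPlus (q : ℚ) (a b : ℕ) : ℚ := ∏ k ∈ Finset.Icc a b, (q ^ k + (-1) ^ k)

lemma key_tail (x : ℚ) (hx0 : 0 < x) (hx : x ≤ 1/2) :
    ∀ a, 2 ≤ a → (1 - x^2) * ∏ k ∈ Finset.Icc 3 a, (1 + (-1)^k * x^k) ≥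
      1 - x^2 - x^3 + x^(if Even a then a+1 else a+2) := by
  intro a ha
  induction a, ha using Nat.le_induction with
  | base =>
    rw [Finset.Icc_eq_empty (by omega)]
    norm_num
  | succ a ha ih =>
    rw [Finset.prod_Icc_succ_top (by omega : 3 ≤ a+1), ← mul_assoc]
    have hx1 : x ≤ 1 := by linarith
    have hu0 : (0:ℚ) ≤ x^(a+1) := by positivity
    have hu3 : x^(a+1) ≤ x^3 := pow_le_pow_of_le_one hx0.le hx1 (by omega)
    have hx3 : x^3 ≤ 1/8 := by nlinarith
    have hx2 : x^2 ≤ 1/4 := by nlinarith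
    rcases Nat.even_or_odd a with he | ho
    · have h1 : ((-1:ℚ))^(a+1) = -1 := (he.add_one).neg_one_pow
      rw [if_pos he] at ih
      rw [if_neg (by simpa using he.add_one), h1,
        show x^(a+1+2) = x^(a+1) * x^2 by ring]
      set y := (1 - x^2) * ∏ k ∈ Finset.Icc 3 a, (1 + (-1)^k * x^k) with hy
      set u := x^(a+1) with hudef
      have hyB : y ≥ 1 - x^2 - x^3 + u := ih
      nlinarith [mul_nonneg (mul_nonneg hu0 hu0) (sub_nonneg.2 hu3),
        mul_nonneg (sub_nonneg.2 (show u ≤ 1 by nlinarith)) (sub_nonneg.2 hyB),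
        mul_nonneg hu0 (sub_nonneg.2 hu3)]
    · have h1 : ((-1:ℚ))^(a+1) = 1 := (ho.add_one).neg_one_pow
      rw [if_neg (by simpa using ho)] at ih
      rw [if_pos ho.add_one, h1]
      set y := (1 - x^2) * ∏ k ∈ Finset.Icc 3 a, (1 + (-1)^k * x^k) with hy
      have hm0 : (0:ℚ) ≤ x^(a+2) := by positivity
      have hyB : y ≥ 1 - x^2 - x^3 + x^(a+2) := ih
      have hy0 : 0 ≤ y := by nlinarith
      nlinarith [mul_nonneg hy0 hu0]

lemma gauss_icc : ∀ n : ℕ, ∑ k ∈ Finset.Icc 1 n, k = (n+1).choose 2 := by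
  intro n
  induction n with
  | zero => simp
  | succ n ih =>
    rw [Finset.sum_Icc_succ_top (by omega), ih]
    simp [Nat.choose_succ_succ, Nat.choose_one_right]
    omega

theorem phiPlus_lower_bound (q a : ℕ) (hq : 2 ≤ q) (ha : 2 ≤ a) :
    phiPlus (q : ℚ) 1 a ≥
      (q : ℚ) ^ ((a + 1).choose 2) *
        (1 - 1 / (q : ℚ) + 1 / (q : ℚ) ^ 2 - 2 / (q : ℚ) ^ 3) := by
  have hq0 : (0:ℚ) < q := by exact_mod_cast (by omega : 0 < q)
  set x : ℚ := 1 / q with hxdef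
  have hx0 : 0 < x := by positivity
  have hx : x ≤ 1/2 := by
    rw [hxdef, div_le_div_iff₀ hq0 (by norm_num)]
    have : (2:ℚ) ≤ q := by exact_mod_cast hq
    linarith
  have hfact : ∀ k ∈ Finset.Icc 1 a, ((q:ℚ) ^ k + (-1) ^ k) = (q:ℚ)^k * (1 + (-1)^k * x^k) := by
    intro k _
    rw [hxdef]
    rw [one_div, inv_pow, mul_add, mul_one, mul_left_comm, mul_inv_cancel₀ (pow_ne_zero _ hq0.ne'), mul_one]
  rw [phiPlus, Finset.prod_congr rfl hfact, Finset.prod_mul_distrib,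
    Finset.prod_pow_eq_pow_sum, gauss_icc]
  have hsplit : Finset.Icc 1 a = Finset.Icc 1 2 ∪ Finset.Icc 3 a := by
    ext k
    simp only [Finset.mem_Icc, Finset.mem_union]
    omega
  have hdisj : Disjoint (Finset.Icc 1 2) (Finset.Icc 3 a) := by
    rw [Finset.disjoint_left]
    intro k hk hk'
    simp only [Finset.mem_Icc] at hk hk'
    omega
  rw [hsplit, Finset.prod_union hdisj]
  have h12 : ∏ k ∈ Finset.Icc 1 2, (1 + (-1:ℚ)^k * x^k) = (1 - x) * (1 + x^2) := by
    rw [show Finset.Icc 1 2 = ({1, 2} : Finset ℕ) from rfl,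
      Finset.prod_insert (by decide), Finset.prod_singleton]
    ring
  rw [h12]
  -- final estimate
  have hkey := key_tail x hx0 hx a ha
  set T := ∏ k ∈ Finset.Icc 3 a, (1 + (-1:ℚ)^k * x^k) with hT
  have hm0 : (0:ℚ) ≤ x^(if Even a then a+1 else a+2) := by positivity
  have hT1 : (1 - x^2) * T ≥ 1 - x^2 - x^3 := by linarith
  have hC : 1 - 1/(q:ℚ) + 1/(q:ℚ)^2 - 2/(q:ℚ)^3 = 1 - x + x^2 - 2*x^3 := by
    rw [hxdef]
    field_simp
  rw [hC, ge_iff_le]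
  have hqpow : (0:ℚ) ≤ (q:ℚ)^((a+1).choose 2) := by positivity
  apply mul_le_mul_of_nonneg_left _ hqpow
  nlinarith [mul_le_mul_of_nonneg_left hT1 (show (0:ℚ) ≤ 1 + x^2 by positivity),
    pow_nonneg hx0.le 4, pow_nonneg hx0.le 5,
    mul_nonneg (pow_nonneg hx0.le 4) (sub_nonneg.2 (show x ≤ 1 by linarith))]
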